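/- For every (u₀, v₀, γ₀) ∈ X × X × ℝ, the set of minimizers of f(u,v,γ) = ‖u−u₀‖² + ‖v−v₀‖² + β²|γ−γ₀|² subject to ‖u‖² − ‖v‖² = 2αγ is nonempty; that is, the projection of any point onto C̃_α is nonempty. -/

import Mathlib

variable {X : Type*} [NormedAddCommGroup X] [InnerProductSpace ℝ X]

/-- Squared β-weighted distance on `X × X × ℝ`. -/
noncomputable def d2 (β : ℝ) (p q : X × X × ℝ) : ℝ :=
  ‖p.1 - q.1‖^2 + ‖p.2.1 - q.2.1‖^2 + β^2 * (p.2.2 - q.2.2)^2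

/-- The set of nearest points of `S` to `z` in the β-weighted norm. -/
noncomputable def projSet (β : ℝ) (S : Set (X × X × ℝ)) (z : X × X × ℝ) :
    Set (X × X × ℝ) :=
  {p | p ∈ S ∧ ∀ q ∈ S, d2 β p z ≤ d2 β q z}

/-- The set `C̃_α`. -/
def Ctilde (α : ℝ) : Set (X × X × ℝ) := {p | ‖p.1‖^2 - ‖p.2.1‖^2 = 2 * α * p.2.2}

/-- The set `C_α`. -/
def Cα (α : ℝ) : Set (X × X × ℝ) := {p | (inner ℝ p.1 p.2.1 : ℝ) = α * p.2.2}

/-- In a normed space with a unit vector, for each `r ≥ 0` and `w` there is `u` with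
`‖u‖ = r` attaining the minimal distance `|r - ‖w‖|` to `w`. -/
lemma exists_norm_eq_dist (e : X) (he : ‖e‖ = 1) (w : X) (r : ℝ) (hr : 0 ≤ r) :
    ∃ u : X, ‖u‖ = r ∧ ‖u - w‖ = |r - ‖w‖| := by
  by_cases hw : w = 0
  · refine ⟨r • e, ?_, ?_⟩
    · simp [norm_smul, he, abs_of_nonneg hr]
    · simp [hw, norm_smul, he, abs_of_nonneg hr]
  · have hwn : (0:ℝ) < ‖w‖ := norm_pos_iff.mpr hw
    refine ⟨(r / ‖w‖) • w, ?_, ?_⟩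
    · rw [norm_smul, Real.norm_eq_abs, abs_of_nonneg (by positivity)]
      field_simp
    · have h1 : (r / ‖w‖) • w - w = (r / ‖w‖ - 1) • w := by
        rw [sub_smul, one_smul]
      rw [h1, norm_smul, Real.norm_eq_abs,
        show r / ‖w‖ - 1 = (r - ‖w‖) / ‖w‖ by field_simp, abs_div, abs_of_pos hwn]
      field_simp

set_option maxHeartbeats 1000000 in
theorem stmt5 (α β : ℝ) (hα : α ≠ 0) (hβ : 0 < β) (u₀ v₀ : X) (γ₀ : ℝ) :
    (projSet β (Ctilde α) (u₀, v₀, γ₀)).Nonempty := by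
  by_cases hX : ∃ e : X, ‖e‖ = 1
  · obtain ⟨e, he⟩ := hX
    set a := ‖u₀‖ with ha
    set b := ‖v₀‖ with hb
    set g : ℝ × ℝ × ℝ → ℝ := fun p => (p.1 - a)^2 + (p.2.1 - b)^2 + β^2 * (p.2.2 - γ₀)^2
      with hg
    set K : Set (ℝ × ℝ × ℝ) :=
      {p | 0 ≤ p.1 ∧ 0 ≤ p.2.1 ∧ p.1^2 - p.2.1^2 = 2 * α * p.2.2} with hK
    set M : ℝ := g (0, 0, 0) with hM
    set T : Set (ℝ × ℝ × ℝ) := K ∩ {p | g p ≤ M} with hT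
    have hgc : Continuous g := by fun_prop
    have hKc : IsClosed K := by
      apply IsClosed.inter (isClosed_le continuous_const continuous_fst)
      apply IsClosed.inter (isClosed_le continuous_const (continuous_fst.comp continuous_snd))
      exact isClosed_eq (by fun_prop) (by fun_prop)
    have hTc : IsClosed T := hKc.inter (isClosed_le hgc continuous_const)
    have h0K : (0, 0, 0) ∈ K := by simp [hK]
    have h0T : (0, 0, 0) ∈ T := ⟨h0K, by show g (0, 0, 0) ≤ M; rw [hM]⟩
    have hTb : Bornology.IsBounded T := by
      have hsub : T ⊆ Set.Icc (a - Real.sqrt M) (a + Real.sqrt M) ×ˢ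
          (Set.Icc (b - Real.sqrt M) (b + Real.sqrt M) ×ˢ
           Set.Icc (γ₀ - Real.sqrt M / β) (γ₀ + Real.sqrt M / β)) := by
        rintro ⟨r, s, γ⟩ ⟨-, hle⟩
        have hle' : (r - a)^2 + (s - b)^2 + β^2 * (γ - γ₀)^2 ≤ M := hle
        have hM0 : (0:ℝ) ≤ M := by simp only [hM, hg]; positivity
        have hsq : Real.sqrt M ^ 2 = M := Real.sq_sqrt hM0
        have hb2 : 0 ≤ β^2 * (γ - γ₀)^2 := mul_nonneg (sq_nonneg β) (sq_nonneg (γ - γ₀))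
        have h1 : (r - a)^2 ≤ M := by nlinarith [sq_nonneg (s - b), hle']
        have h2 : (s - b)^2 ≤ M := by nlinarith [sq_nonneg (r - a), hle']
        have h3 : β^2 * (γ - γ₀)^2 ≤ M := by nlinarith [sq_nonneg (r - a), sq_nonneg (s - b), hle']
        have a1 : |r - a| ≤ Real.sqrt M := by
          rw [← Real.sqrt_sq_eq_abs]; exact Real.sqrt_le_sqrt h1
        have a2 : |s - b| ≤ Real.sqrt M := by
          rw [← Real.sqrt_sq_eq_abs]; exact Real.sqrt_le_sqrt h2
        have a3 : |β * (γ - γ₀)| ≤ Real.sqrt M := by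
          rw [← Real.sqrt_sq_eq_abs]
          apply Real.sqrt_le_sqrt; nlinarith
        rw [abs_le] at a1 a2 a3
        have hdd : Real.sqrt M / β * β = Real.sqrt M := div_mul_cancel₀ _ hβ.ne'
        refine ⟨⟨by linarith [a1.1], by linarith [a1.2]⟩,
          ⟨by linarith [a2.1], by linarith [a2.2]⟩, ?_, ?_⟩
        · nlinarith [a3.1, a3.2, hβ, hdd]
        · nlinarith [a3.1, a3.2, hβ, hdd]
      exact (Bornology.IsBounded.subset
        ((Metric.isBounded_Icc _ _).prod ((Metric.isBounded_Icc _ _).prod (Metric.isBounded_Icc _ _))) hsub)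
    have hTcomp : IsCompact T := Metric.isCompact_of_isClosed_isBounded hTc hTb
    obtain ⟨p, hpT, hpmin⟩ := hTcomp.exists_isMinOn ⟨_, h0T⟩ hgc.continuousOn
    obtain ⟨r, s, γ⟩ := p
    obtain ⟨⟨hr0, hs0, hcon⟩, hpM⟩ := hpT
    have hmin : ∀ q ∈ K, g (r, s, γ) ≤ g q := by
      intro q hq
      by_cases hqM : g q ≤ M
      · exact hpmin ⟨hq, hqM⟩
      · exact le_trans hpM (le_of_not_ge hqM)
    obtain ⟨u, hu, hud⟩ := exists_norm_eq_dist e he u₀ r hr0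
    obtain ⟨v, hv, hvd⟩ := exists_norm_eq_dist e he v₀ s hs0
    refine ⟨(u, v, γ), ?_, ?_⟩
    · show ‖u‖^2 - ‖v‖^2 = 2 * α * γ
      rw [hu, hv]; exact hcon
    · rintro ⟨qu, qv, qγ⟩ hq
      have hqK : (‖qu‖, ‖qv‖, qγ) ∈ K := ⟨norm_nonneg _, norm_nonneg _, hq⟩
      have h1 : (‖qu‖ - a)^2 ≤ ‖qu - u₀‖^2 := by
        have := abs_norm_sub_norm_le qu u₀
        nlinarith [abs_nonneg (‖qu‖ - ‖u₀‖), sq_abs (‖qu‖ - ‖u₀‖), norm_nonneg (qu - u₀)]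
      have h2 : (‖qv‖ - b)^2 ≤ ‖qv - v₀‖^2 := by
        have := abs_norm_sub_norm_le qv v₀
        nlinarith [abs_nonneg (‖qv‖ - ‖v₀‖), sq_abs (‖qv‖ - ‖v₀‖), norm_nonneg (qv - v₀)]
      have key := hmin _ hqK
      simp only [hg] at key
      have e1 : ‖u - u₀‖^2 = (r - a)^2 := by rw [hud, sq_abs]
      have e2 : ‖v - v₀‖^2 = (s - b)^2 := by rw [hvd, sq_abs]
      show ‖u - u₀‖^2 + ‖v - v₀‖^2 + β^2 * (γ - γ₀)^2 ≤
        ‖qu - u₀‖^2 + ‖qv - v₀‖^2 + β^2 * (qγ - γ₀)^2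
      rw [e1, e2]
      linarith [key, h1, h2]
  · have hz : ∀ x : X, x = 0 := by
      intro x
      by_contra h
      exact hX ⟨(‖x‖⁻¹) • x, by
        rw [norm_smul, norm_inv, norm_norm,
          inv_mul_cancel₀ (norm_ne_zero_iff.mpr h)]⟩
    refine ⟨(0, 0, 0), ?_, ?_⟩
    · show ‖(0:X)‖^2 - ‖(0:X)‖^2 = 2 * α * 0
      simp
    · rintro ⟨qu, qv, qγ⟩ hq
      have h1 : qu = 0 := hz qu
      have h2 : qv = 0 := hz qv
      have hq' : ‖qu‖^2 - ‖qv‖^2 = 2 * α * qγ := hq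
      rw [h1, h2] at hq'
      have h0 : 2 * α * qγ = 0 := by rw [← hq', norm_zero]; ring
      have hγ : qγ = 0 :=
        (mul_eq_zero.mp h0).resolve_left (mul_ne_zero two_ne_zero hα)
      rw [h1, h2, hγ]
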